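/- Let R be a finite commutative local ring of odd characteristic in which -1 is not a square of a unit, and let ν be a positive even integer. Then I_{2ν} is cogredient to H_{2ν}, and I_{2ν+1} is cogredient to H_{2ν} ⊕ (1) over R. -/

import Mathlib

/-- Two square matrices are cogredient if `P * S1 * P.transpose = S2` for some invertible `P`. -/
def Cogredient {R : Type*} [CommRing R] {n : Type*} [Fintype n] [DecidableEq n]
    (S1 S2 : Matrix n n R) : Prop :=
  ∃ P : Matrix n n R, IsUnit P.det ∧ P * S1 * P.transpose = S2

/-- Block diagonal sum `A ⊕ B` of square matrices. -/
def matOplus {R : Type*} [CommRing R] {a b : ℕ}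
    (A : Matrix (Fin a) (Fin a) R) (B : Matrix (Fin b) (Fin b) R) :
    Matrix (Fin (a + b)) (Fin (a + b)) R :=
  (Matrix.reindex finSumFinEquiv finSumFinEquiv) (Matrix.fromBlocks A 0 0 B)

/-- The hyperbolic matrix `H_{2ν} = [[0, I_ν], [I_ν, 0]]`. -/
def hypMat (R : Type*) [CommRing R] (ν : ℕ) : Matrix (Fin (ν + ν)) (Fin (ν + ν)) R :=
  (Matrix.reindex finSumFinEquiv finSumFinEquiv)
    (Matrix.fromBlocks (0 : Matrix (Fin ν) (Fin ν) R) 1 1 0)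

section Aux

open IsLocalRing

set_option linter.unusedSectionVars false

variable {R : Type*} [CommRing R] [IsLocalRing R] [Fintype R]


lemma two_unit (hchar : Odd (ringChar R)) : IsUnit (2 : R) := by
  obtain ⟨k, hk⟩ := hchar
  refine IsUnit.of_mul_eq_one (a := (2 : R)) (-(k : R)) ?_
  have h0 : ((ringChar R : ℕ) : R) = 0 := ringChar.Nat.cast_ringChar
  rw [hk] at h0
  push_cast at h0
  linear_combination -h0

def unitsOne (R : Type*) [CommRing R] [IsLocalRing R] : Subgroup Rˣ where
  carrier := {u | (u : R) - 1 ∈ maximalIdeal R}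
  one_mem' := by simp
  mul_mem' := by
    intro u v hu hv
    have h : ((u * v : Rˣ) : R) - 1 = (u : R) * ((v : R) - 1) + ((u : R) - 1) := by
      push_cast; ring
    rw [Set.mem_setOf_eq, h]
    exact Ideal.add_mem _ (Ideal.mul_mem_left _ _ hv) hu
  inv_mem' := by
    intro u hu
    have h2 : ((u⁻¹ : Rˣ) : R) * (u : R) = 1 := by
      rw [← Units.val_mul, inv_mul_cancel, Units.val_one]
    have h : ((u⁻¹ : Rˣ) : R) - 1 = (-((u⁻¹ : Rˣ) : R)) * ((u : R) - 1) := by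
      linear_combination h2
    show ((u⁻¹ : Rˣ) : R) - 1 ∈ maximalIdeal R
    rw [h]
    exact Ideal.mul_mem_left _ _ hu

lemma odd_card_unitsOne (hchar : Odd (ringChar R)) :
    Odd (Nat.card (unitsOne R)) := by
  haveI := Fintype.ofFinite (unitsOne R)
  rw [Nat.card_eq_fintype_card]
  rw [Nat.odd_iff, ← Nat.not_even_iff]
  intro heven
  obtain ⟨u, hu⟩ := exists_prime_orderOf_dvd_card (G := unitsOne R) 2 heven.two_dvd
  have hu2 : u ^ 2 = 1 := by rw [← hu]; exact pow_orderOf_eq_one u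
  have hx2 : ((u : Rˣ) : R) ^ 2 = 1 := by
    have h1 : ((u ^ 2 : unitsOne R) : Rˣ) = 1 := by rw [hu2]; rfl
    have h3 := congrArg (Units.val) h1
    push_cast at h3 ⊢
    simpa using h3
  set x : R := ((u : Rˣ) : R) with hxdef
  have hxm : x - 1 ∈ maximalIdeal R := u.2
  have hunit : IsUnit (x + 1) := by
    by_contra hn
    have hmem : x + 1 ∈ maximalIdeal R := hn
    have h2 : (2 : R) ∈ maximalIdeal R := by
      have h4 : (x + 1) - (x - 1) ∈ maximalIdeal R := Ideal.sub_mem _ hmem hxm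
      have : (x+1) - (x-1) = 2 := by ring
      rwa [this] at h4
    exact h2 (two_unit hchar)
  have hzero : (x - 1) * (x + 1) = 0 := by linear_combination hx2
  have hx1 : x - 1 = 0 := by
    obtain ⟨v, hv⟩ := hunit
    have h5 := congrArg (· * ((v⁻¹ : Rˣ) : R)) hzero
    simp only [zero_mul, mul_assoc, ← hv, Units.mul_inv, mul_one] at h5
    exact h5
  have : u = 1 := by
    apply Subtype.ext; apply Units.ext
    show x = 1
    linear_combination hx1
  rw [this, orderOf_one] at hu
  norm_num at hu

lemma sq_of_one_add_mem (hchar : Odd (ringChar R)) {t : R}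
    (ht : t ∈ maximalIdeal R) : ∃ w : R, w ^ 2 = 1 + t := by
  have hunit : IsUnit (1 + t) := by
    have := isUnit_one_sub_self_of_mem_nonunits (-t) (by simpa using ht)
    simpa [sub_neg_eq_add] using this
  obtain ⟨v, hv⟩ := hunit
  have hvm : v ∈ unitsOne R := by
    show (v : R) - 1 ∈ maximalIdeal R
    rw [hv]; simpa using ht
  set V : unitsOne R := ⟨v, hvm⟩
  set n := orderOf V with hn
  haveI := Fintype.ofFinite (unitsOne R)
  have hdvd : n ∣ Nat.card (unitsOne R) := by
    rw [Nat.card_eq_fintype_card]; exact orderOf_dvd_card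
  have hodd : Odd n := (odd_card_unitsOne hchar).of_dvd_nat ?_ <;> try exact hdvd
  · obtain ⟨k, hk⟩ := hodd
    refine ⟨((v ^ (k + 1) : Rˣ) : R), ?_⟩
    have hVn : V ^ n = 1 := pow_orderOf_eq_one V
    have hvn : v ^ n = 1 := by
      have := congrArg (fun z : unitsOne R => (z : Rˣ)) hVn
      simpa using this
    have : v ^ (2 * (k + 1)) = v := by
      have : 2 * (k + 1) = n + 1 := by omega
      rw [this, pow_succ, hvn, one_mul]
    calc ((v ^ (k + 1) : Rˣ) : R) ^ 2 = ((v ^ (2 * (k+1)) : Rˣ) : R) := by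
          push_cast [← pow_mul]; ring_nf
      _ = 1 + t := by rw [this, hv]

lemma exists_sum_sq_neg_one (hchar : Odd (ringChar R)) : ∃ a b : R, a ^ 2 + b ^ 2 = -1 := by
  classical
  set k := ResidueField R with hk
  haveI : Finite k := Finite.of_surjective _ (residue_surjective (R := R))
  haveI : Fintype k := Fintype.ofFinite k
  haveI : CharP k (ringChar k) := ringChar.charP k
  haveI : NeZero (ringChar k) := ⟨CharP.char_ne_zero_of_finite k (ringChar k)⟩
  have key : ∀ m n : ℕ, ((m : k) ≠ 0) → (m : k) ^ 2 + (n : k) ^ 2 = -1 →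
      ∃ a b : R, a ^ 2 + b ^ 2 = -1 := by
    intro m n hm0 hmn
    have hA : IsUnit ((m : R)) := by
      rw [← notMem_maximalIdeal]
      intro hmem
      have h0 : residue R (m : R) = 0 := (residue_eq_zero_iff _).2 hmem
      rw [map_natCast] at h0
      exact hm0 h0
    obtain ⟨v, hv⟩ := hA
    set c : R := ((v⁻¹ : Rˣ) : R) with hc
    have hvc : (v : R) * c = 1 := by rw [hc, ← Units.val_mul, mul_inv_cancel, Units.val_one]
    set t : R := (-1 - (n : R) ^ 2) * c ^ 2 - 1 with hts
    have htm : t ∈ maximalIdeal R := by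
      rw [← residue_eq_zero_iff]
      have h1 : residue R ((v : R)) * residue R c = 1 := by
        rw [← map_mul, hvc, map_one]
      have h2 : residue R ((v : R)) = (m : k) := by rw [hv, map_natCast]
      have : residue R t = (-1 - (n : k) ^ 2) * (residue R c) ^ 2 - 1 := by
        rw [hts]; push_cast [map_sub, map_mul, map_pow, map_one, map_neg, map_natCast]; ring
      rw [this]
      rw [h2] at h1
      have hmsq : -1 - (n : k) ^ 2 = (m : k) ^ 2 := by linear_combination -hmn
      rw [hmsq]
      linear_combination ((m:k) * (residue R c) + 1) * h1
    obtain ⟨w, hw⟩ := sq_of_one_add_mem hchar htm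
    refine ⟨(v : R) * w, (n : R), ?_⟩
    have : ((v : R) * w) ^ 2 = (v : R) ^ 2 * ((-1 - (n : R) ^ 2) * c ^ 2) := by
      rw [mul_pow, hw, hts]; ring
    rw [this]
    have hvc2 : (v : R) ^ 2 * c ^ 2 = 1 := by rw [← mul_pow, hvc, one_pow]
    linear_combination (-1 - (n:R)^2) * hvc2
  obtain ⟨m, n, hmn⟩ := CharP.sq_add_sq k (ringChar k) (-1)
  push_cast at hmn
  by_cases hm : (m : k) = 0
  · by_cases hn : (n : k) = 0
    · exfalso
      rw [hm, hn] at hmn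
      norm_num at hmn
    · exact key n m hn (by linear_combination hmn)
  · exact key m n hm hmn


end Aux

section Aux2

open Matrix

variable {R : Type*} [CommRing R]

lemma reindex_mul_reindex {n m : Type*} [Fintype n] [Fintype m] [DecidableEq n] [DecidableEq m]
    (e : n ≃ m) (A B : Matrix n n R) :
    reindex e e A * reindex e e B = reindex e e (A * B) := by
  simp [reindex_apply, Matrix.submatrix_mul_equiv]

lemma unit_det_of_sq_one {n : Type*} [Fintype n] [DecidableEq n] {M : Matrix n n R}
    (h : M * M = 1) : IsUnit M.det :=
  IsUnit.of_mul_eq_one _ (by rw [← det_mul, h, det_one])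

lemma cogredient_one_of {n : Type*} [Fintype n] [DecidableEq n] {P T : Matrix n n R}
    (h1 : P * Pᵀ = T) (h2 : IsUnit T.det) : Cogredient 1 T := by
  refine ⟨P, ?_, by rwa [mul_one]⟩
  have h3 : P.det * P.det = T.det := by
    rw [← h1, det_mul, det_transpose]
  exact isUnit_of_mul_isUnit_left (h3 ▸ h2)



end Aux2

open Matrix IsLocalRing in
/-- if -1 is not a square of a unit and ν is a positive even integer, then
`I_{2ν}` is cogredient to `H_{2ν}` and `I_{2ν+1}` is cogredient to `H_{2ν} ⊕ (1)`. -/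
theorem stmt_15 (R : Type*) [CommRing R] [IsLocalRing R] [Fintype R]
    (hchar : Odd (ringChar R)) (hm1 : ∀ a : Rˣ, (-1 : R) ≠ (a : R) ^ 2)
    (ν : ℕ) (hν : 0 < ν) (hνeven : Even ν) :
    Cogredient (1 : Matrix (Fin (ν + ν)) (Fin (ν + ν)) R) (hypMat R ν) ∧
      Cogredient (1 : Matrix (Fin (ν + ν + 1)) (Fin (ν + ν + 1)) R)
        (matOplus (hypMat R ν) (1 : Matrix (Fin 1) (Fin 1) R)) := by
  obtain ⟨μ, hμ⟩ := hνeven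
  subst hμ
  obtain ⟨a, b, hab⟩ := exists_sum_sq_neg_one (R := R) hchar
  obtain ⟨h, hh⟩ := (two_unit (R := R) hchar).exists_right_inv
  have hab' : a * a + b * b = -1 := by linear_combination hab
  set ν := μ + μ with hν
  -- the ν × ν matrix with square -1
  set N₀ : Matrix (Fin μ ⊕ Fin μ) (Fin μ ⊕ Fin μ) R :=
    fromBlocks (a • 1) (b • 1) (b • 1) (-(a • 1)) with hN₀def
  have hN₀sym : N₀ᵀ = N₀ := by
    simp [hN₀def, fromBlocks_transpose, transpose_smul]
  have hN₀ : N₀ * N₀ = -1 := by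
    rw [hN₀def, fromBlocks_multiply]
    have e1 : a • (1 : Matrix (Fin μ) (Fin μ) R) * (a • 1) + b • 1 * (b • 1) = -1 := by
      simp [Matrix.smul_mul, Matrix.mul_smul, smul_smul, ← add_smul, hab']
    have e2 : a • (1 : Matrix (Fin μ) (Fin μ) R) * (b • 1) + b • 1 * -(a • 1) = 0 := by
      simp [Matrix.smul_mul, Matrix.mul_smul, smul_smul, mul_comm, ← add_smul]
    have e3 : b • (1 : Matrix (Fin μ) (Fin μ) R) * (a • 1) + -(a • 1) * (b • 1) = 0 := by
      simp [Matrix.smul_mul, Matrix.mul_smul, smul_smul, mul_comm, ← add_smul]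
    have e4 : b • (1 : Matrix (Fin μ) (Fin μ) R) * (b • 1) + -(a • 1) * -(a • 1) = -1 := by
      simp [Matrix.smul_mul, Matrix.mul_smul, smul_smul, ← add_smul, add_comm, hab']
    rw [e1, e2, e3, e4, show (-1 : Matrix (Fin μ) (Fin μ) R) = -(1 : Matrix (Fin μ) (Fin μ) R) from rfl,
      show (0 : Matrix (Fin μ) (Fin μ) R) = -(0 : Matrix (Fin μ) (Fin μ) R) by simp,
      ← fromBlocks_neg, fromBlocks_one]
  -- N over Fin ν
  set N : Matrix (Fin ν) (Fin ν) R := reindex finSumFinEquiv finSumFinEquiv N₀ with hNdef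
  have hNsym : Nᵀ = N := by rw [hNdef, transpose_reindex, hN₀sym]
  have hNN : N * N = -1 := by
    rw [hNdef, reindex_mul_reindex, hN₀]
    simp [reindex_apply, Matrix.submatrix_neg, Matrix.submatrix_one_equiv]
  have hhh : h + h = 1 := by linear_combination hh
  -- the transforming matrix P
  set P₀ : Matrix (Fin ν ⊕ Fin ν) (Fin ν ⊕ Fin ν) R :=
    fromBlocks 1 N (h • 1) (-(h • N)) with hP₀def
  have hP₀t : P₀ᵀ = fromBlocks 1 (h • 1) N (-(h • N)) := by
    rw [hP₀def]
    simp only [fromBlocks_transpose, transpose_smul, transpose_neg, transpose_one, hNsym]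
  have hP₀ : P₀ * P₀ᵀ = fromBlocks 0 1 1 0 := by
    rw [hP₀t, hP₀def, fromBlocks_multiply]
    have f1 : (1 : Matrix (Fin ν) (Fin ν) R) * 1 + N * N = 0 := by
      rw [hNN]; simp
    have f2 : (1 : Matrix (Fin ν) (Fin ν) R) * (h • 1) + N * (-(h • N)) = 1 := by
      rw [one_mul, Matrix.mul_neg, Matrix.mul_smul, hNN]
      simp [← add_smul, hhh]
    have f3 : (h • (1 : Matrix (Fin ν) (Fin ν) R)) * 1 + (-(h • N)) * N = 1 := by
      rw [mul_one, Matrix.neg_mul, Matrix.smul_mul, hNN]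
      simp [← add_smul, hhh]
    have f4 : (h • (1 : Matrix (Fin ν) (Fin ν) R)) * (h • 1) + (-(h • N)) * (-(h • N)) = 0 := by
      rw [Matrix.neg_mul, Matrix.mul_neg, neg_neg, Matrix.smul_mul, Matrix.mul_smul,
        Matrix.smul_mul, Matrix.mul_smul, hNN, one_mul]
      simp [smul_smul]
    rw [f1, f2, f3, f4]
  set P : Matrix (Fin (ν + ν)) (Fin (ν + ν)) R := reindex finSumFinEquiv finSumFinEquiv P₀
    with hPdef
  have hP : P * Pᵀ = hypMat R ν := by
    rw [hPdef, transpose_reindex, reindex_mul_reindex, hP₀]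
    rfl
  have hHsq : hypMat R ν * hypMat R ν = 1 := by
    show reindex finSumFinEquiv finSumFinEquiv (fromBlocks 0 1 1 0) *
      reindex finSumFinEquiv finSumFinEquiv (fromBlocks (0 : Matrix (Fin ν) (Fin ν) R) 1 1 0) = 1
    rw [reindex_mul_reindex, fromBlocks_multiply]
    simp only [Matrix.mul_zero, Matrix.zero_mul, Matrix.mul_one, Matrix.one_mul,
      add_zero, zero_add, fromBlocks_one]
    simp [reindex_apply, Matrix.submatrix_one_equiv]
  have hHdet : IsUnit (hypMat R ν).det := unit_det_of_sq_one hHsq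
  refine ⟨cogredient_one_of hP hHdet, ?_⟩
  -- second part
  set T : Matrix (Fin (ν + ν + 1)) (Fin (ν + ν + 1)) R :=
    matOplus (hypMat R ν) (1 : Matrix (Fin 1) (Fin 1) R) with hTdef
  set Q₀ : Matrix (Fin (ν + ν) ⊕ Fin 1) (Fin (ν + ν) ⊕ Fin 1) R :=
    fromBlocks P 0 0 1 with hQ₀def
  set Q : Matrix (Fin (ν + ν + 1)) (Fin (ν + ν + 1)) R :=
    reindex finSumFinEquiv finSumFinEquiv Q₀ with hQdef
  have hQ : Q * Qᵀ = T := by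
    rw [hQdef, transpose_reindex, reindex_mul_reindex, hQ₀def, fromBlocks_transpose,
      fromBlocks_multiply]
    simp only [transpose_zero, transpose_one, Matrix.mul_zero, Matrix.zero_mul,
      Matrix.mul_one, Matrix.one_mul, add_zero, zero_add, hP]
    rfl
  have hTsq : T * T = 1 := by
    rw [hTdef]
    show reindex finSumFinEquiv finSumFinEquiv (fromBlocks (hypMat R ν) 0 0 1) *
      reindex finSumFinEquiv finSumFinEquiv (fromBlocks (hypMat R ν) 0 0 1) = 1
    rw [reindex_mul_reindex, fromBlocks_multiply]
    simp only [Matrix.mul_zero, Matrix.zero_mul, Matrix.mul_one, Matrix.one_mul,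
      add_zero, zero_add, hHsq, fromBlocks_one]
    simp [reindex_apply, Matrix.submatrix_one_equiv]
  exact cogredient_one_of hQ (unit_det_of_sq_one hTsq)
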